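/- In a rowo closed process system with m transitions and initial configuration c₀ = (pos₀, D₀), for every solo execution of instance i from c₀ there exists a solo execution of instance i from c₀ of length at most m * (m + 1) producing the same database. -/

import Mathlib

/-- A closed process system over a type `U` of facts. -/
structure ProcSys (U : Type) [DecidableEq U] where
  /-- places -/
  P : Type
  /-- transitions -/
  T : Type
  [finP : Fintype P]
  [finT : Fintype T]
  src : T → P
  tgt : T → P
  /-- number of process instances -/
  k : ℕ
  /-- enabling predicate -/
  En : Fin k → T → Finset U → Prop
  /-- writing function -/
  Wr : Fin k → T → Finset U → Finset U

attribute [instance] ProcSys.finP ProcSys.finT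

namespace ProcSys

variable {U : Type} [DecidableEq U]

/-- A configuration: positions of the instances together with a database. -/
abbrev Config (S : ProcSys U) : Type := (Fin S.k → S.P) × Finset U

/-- An allowed step by instance `i` via transition `t`. -/
def Step (S : ProcSys U) (i : Fin S.k) (t : S.T) (c c' : S.Config) : Prop :=
  c.1 i = S.src t ∧ S.En i t c.2 ∧
    c' = (Function.update c.1 i (S.tgt t), c.2 ∪ S.Wr i t c.2)

/-- `f` (restricted to `0, …, n`) is an execution of length `n` from configuration `c`. -/
def IsExec (S : ProcSys U) (c : S.Config) (n : ℕ) (f : ℕ → S.Config) : Prop :=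
  f 0 = c ∧ ∀ j < n, ∃ (i : Fin S.k) (t : S.T), S.Step i t (f j) (f (j + 1))

end ProcSys

/-- The system is rowo (read-only-write-only): enabling and writing depend only
on a fixed read-only part `Rd` of the database, and written facts avoid `Rd`. -/
def ProcSys.Rowo {U : Type} [DecidableEq U] (S : ProcSys U) : Prop :=
  ∃ Rd : Finset U, ∀ (i : Fin S.k) (t : S.T) (D : Finset U),
    (S.En i t D ↔ S.En i t (D ∩ Rd)) ∧
    S.Wr i t D = S.Wr i t (D ∩ Rd) ∧
    S.Wr i t D ∩ Rd = ∅

/-- A solo execution of instance `i`: an execution in which every step is by `i`. -/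
def ProcSys.SoloExec {U : Type} [DecidableEq U] (S : ProcSys U) (i : Fin S.k)
    (c : S.Config) (n : ℕ) (f : ℕ → S.Config) : Prop :=
  f 0 = c ∧ ∀ j < n, ∃ t : S.T, S.Step i t (f j) (f (j + 1))

/-- in a rowo system, every solo execution of instance `i` can be
replaced by a solo execution of `i` of length at most `m * (m + 1)` producing the
same database. -/
theorem rowo_solo_shorten (U : Type) [Fintype U] [DecidableEq U]
    (S : ProcSys U) (hrowo : S.Rowo)
    (pos₀ : Fin S.k → S.P) (D₀ : Finset U) (i : Fin S.k)
    (n : ℕ) (f : ℕ → S.Config)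
    (hexec : S.SoloExec i (pos₀, D₀) n f) :
    ∃ (n' : ℕ) (f' : ℕ → S.Config),
      n' ≤ Fintype.card S.T * (Fintype.card S.T + 1) ∧
      S.SoloExec i (pos₀, D₀) n' f' ∧ (f' n').2 = (f n).2 := by
  classical
  obtain ⟨Rd, hRd⟩ := hrowo
  suffices h : ∀ n f, S.SoloExec i (pos₀, D₀) n f →
      ∃ n' f', n' ≤ Fintype.card S.T * Fintype.card S.T ∧
        S.SoloExec i (pos₀, D₀) n' f' ∧ (f' n').2 = (f n).2 by
    obtain ⟨n', f', h1, h2, h3⟩ := h n f hexec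
    exact ⟨n', f', h1.trans (Nat.mul_le_mul_left _ (Nat.le_succ _)), h2, h3⟩
  clear hexec n f
  intro n
  induction n using Nat.strong_induction_on with
  | _ n IH =>
  intro f hexec
  by_cases hn : n ≤ Fintype.card S.T * Fintype.card S.T
  · exact ⟨n, f, hn, hexec, rfl⟩
  push_neg at hn
  -- it suffices to find a strictly shorter solo execution with the same final db
  suffices h : ∃ n'' , n'' < n ∧ ∃ f'', S.SoloExec i (pos₀, D₀) n'' f'' ∧
      (f'' n'').2 = (f n).2 by
    obtain ⟨n'', hlt, f'', he, hdb⟩ := h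
    obtain ⟨n', f', h1, h2, h3⟩ := IH n'' hlt f'' he
    exact ⟨n', f', h1, h2, h3.trans hdb⟩
  have hn0 : 0 < n := by omega
  obtain ⟨t₀, ht₀⟩ := hexec.2 0 hn0
  -- choose the transition of each step
  set tt : ℕ → S.T := fun j =>
    if h : ∃ u, S.Step i u (f j) (f (j + 1)) then h.choose else t₀ with htt_def
  have htt : ∀ j < n, S.Step i (tt j) (f j) (f (j + 1)) := by
    intro j hj
    have he := hexec.2 j hj
    simp only [htt_def, dif_pos he]
    exact he.choose_spec
  -- the set of transitions used in the first j steps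
  set used : ℕ → Finset S.T := fun j => (Finset.range j).image tt with hused_def
  have hmono : ∀ j j' : ℕ, j ≤ j' → used j ⊆ used j' := by
    intro j j' hjj
    exact Finset.image_subset_image (Finset.range_subset_range.mpr hjj)
  -- key invariants along the execution
  have hinv : ∀ j, j ≤ n →
      ((f j).2 = D₀ ∪ (used j).biUnion (fun u => S.Wr i u D₀) ∧
        ∀ x, x ≠ i → (f j).1 x = pos₀ x) := by
    intro j
    induction j with
    | zero =>
      intro _
      constructor
      · simp [hused_def, hexec.1]
      · intro x _; rw [hexec.1]
    | succ j ih =>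
      intro hj
      obtain ⟨hdb, hpos⟩ := ih (by omega)
      obtain ⟨hsrc, hen, heq⟩ := htt j (by omega)
      have hBRd : ((used j).biUnion (fun u => S.Wr i u D₀)) ∩ Rd = ∅ := by
        rw [Finset.eq_empty_iff_forall_notMem]
        intro x hx
        rw [Finset.mem_inter, Finset.mem_biUnion] at hx
        obtain ⟨⟨u, _, hxu⟩, hxRd⟩ := hx
        have := (hRd i u D₀).2.2
        have : x ∈ S.Wr i u D₀ ∩ Rd := Finset.mem_inter.mpr ⟨hxu, hxRd⟩
        rw [(hRd i u D₀).2.2] at this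
        exact absurd this (Finset.notMem_empty x)
      have hcap : (f j).2 ∩ Rd = D₀ ∩ Rd := by
        rw [hdb, Finset.union_inter_distrib_right, hBRd, Finset.union_empty]
      have hwr : S.Wr i (tt j) (f j).2 = S.Wr i (tt j) D₀ := by
        rw [(hRd i (tt j) (f j).2).2.1, hcap, ← (hRd i (tt j) D₀).2.1]
      have hused_succ : used (j + 1) = insert (tt j) (used j) := by
        simp [hused_def, Finset.range_add_one]
      constructor
      · have : (f (j + 1)).2 = (f j).2 ∪ S.Wr i (tt j) (f j).2 := by rw [heq]
        rw [this, hwr, hdb, hused_succ, Finset.biUnion_insert,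
          Finset.union_comm (S.Wr i (tt j) D₀), ← Finset.union_assoc]
      · intro x hx
        have : (f (j + 1)).1 = Function.update (f j).1 i (S.tgt (tt j)) := by rw [heq]
        rw [this, Function.update_of_ne hx]
        exact hpos x hx
  have hposi : ∀ j, j < n → (f (j + 1)).1 = Function.update pos₀ i (S.tgt (tt j)) := by
    intro j hj
    obtain ⟨_, _, heq⟩ := htt j hj
    funext x
    by_cases hx : x = i
    · subst hx
      rw [heq]
      simp [Function.update_self]
    · rw [Function.update_of_ne hx]
      exact (hinv (j + 1) (by omega)).2 x hx
  -- pigeonhole: two steps with the same transition and same used-set size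
  have hub : ∀ j : ℕ, (used j).card ≤ Fintype.card S.T := fun j => Finset.card_le_univ _
  have hlb : ∀ j : ℕ, 1 ≤ (used (j + 1)).card := by
    intro j
    refine Finset.card_pos.mpr ⟨tt j, ?_⟩
    exact Finset.mem_image_of_mem tt (Finset.mem_range.mpr (Nat.lt_succ_self j))
  set g : Fin n → S.T × Fin (Fintype.card S.T) := fun j =>
    (tt j.val, ⟨(used (j.val + 1)).card - 1, by
      have h1 := hub (j.val + 1)
      have h2 := hlb j.val
      omega⟩) with hg_def
  obtain ⟨a, b, hab, hgab⟩ := Fintype.exists_ne_map_eq_of_card_lt g (by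
    simp only [Fintype.card_prod, Fintype.card_fin]
    exact hn)
  -- wlog a < b; extract the two step indices
  have key : ∀ j j' : ℕ, j < j' → j' < n → tt j = tt j' →
      (used (j + 1)).card = (used (j' + 1)).card → f (j + 1) = f (j' + 1) := by
    intro j j' hjj hj'n htteq hcardeq
    have husedeq : used (j + 1) = used (j' + 1) :=
      Finset.eq_of_subset_of_card_le (hmono _ _ (by omega)) (le_of_eq hcardeq.symm)
    have hdb1 := (hinv (j + 1) (by omega)).1
    have hdb2 := (hinv (j' + 1) (by omega)).1
    have hp1 := hposi j (by omega)
    have hp2 := hposi j' hj'n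
    have : (f (j + 1)).1 = (f (j' + 1)).1 := by rw [hp1, hp2, htteq]
    have hdb : (f (j + 1)).2 = (f (j' + 1)).2 := by rw [hdb1, hdb2, husedeq]
    exact Prod.ext this hdb
  obtain ⟨j, j', hjj, hj'n, hfeq⟩ : ∃ j j' : ℕ, j < j' ∧ j' < n ∧ f (j + 1) = f (j' + 1) := by
    rcases lt_or_gt_of_ne hab with h | h
    · refine ⟨a.val, b.val, h, b.isLt, key a.val b.val h b.isLt ?_ ?_⟩
      · exact congrArg Prod.fst hgab
      · have := congrArg (fun p : S.T × Fin (Fintype.card S.T) => (p.2 : ℕ)) hgab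
        simp only [hg_def] at this
        have h1 := hlb a.val
        have h2 := hlb b.val
        omega
    · refine ⟨b.val, a.val, h, a.isLt, key b.val a.val h a.isLt ?_ ?_⟩
      · exact (congrArg Prod.fst hgab).symm
      · have := congrArg (fun p : S.T × Fin (Fintype.card S.T) => (p.2 : ℕ)) hgab
        simp only [hg_def] at this
        have h1 := hlb a.val
        have h2 := hlb b.val
        omega
  -- cut out the segment between j+1 and j'+1
  set d : ℕ := j' - j with hd_def
  have hd1 : 1 ≤ d := by omega
  refine ⟨n - d, by omega, fun l => if l < j + 1 then f l else f (l + d), ?_, ?_⟩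
  · constructor
    · simp only [if_pos (by omega : 0 < j + 1)]
      exact hexec.1
    · intro l hl
      by_cases h1 : l + 1 < j + 1
      · refine ⟨tt l, ?_⟩
        simp only [if_pos (by omega : l < j + 1), if_pos h1]
        exact htt l (by omega)
      · by_cases h2 : l + 1 = j + 1
        · refine ⟨tt j, ?_⟩
          have hl' : l = j := by omega
          subst hl'
          simp only [if_pos (by omega : l < l + 1), if_neg (by omega : ¬ l + 1 < l + 1)]
          have : l + 1 + d = j' + 1 := by omega
          rw [this, ← hfeq]
          exact htt l (by omega)
        · refine ⟨tt (l + d), ?_⟩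
          simp only [if_neg (by omega : ¬ l < j + 1), if_neg (by omega : ¬ l + 1 < j + 1)]
          have : l + 1 + d = l + d + 1 := by omega
          rw [this]
          exact htt (l + d) (by omega)
  · have hnd : ¬ (n - d < j + 1) := by omega
    simp only [if_neg hnd]
    congr 2
    omega
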